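/- Let L > 0, κ > 0, let w : [0,L] → ℝ be continuous, and let μ, μ' be finite Borel measures on [0,L] with total masses η := μ([0,L]) and η' := μ'([0,L]) satisfying 0 < η ≤ 1 and 0 < η' ≤ 1. For a finite Borel measure ν with mass η(ν) ∈ (0,1] and a continuous p, write ℓ(ν,p) := 1/(1+κη(ν)) + (κη(ν)/(1+κη(ν)))·(1/η(ν))∫₀^L p dν. Let p* and p*' be the unique fixed points of Ψ_{w,μ} and Ψ_{w,μ'} respectively. Then sup_{x∈[0,L]} |p*(x) − p*'(x)| ≤ (1+κ)·|ℓ(μ,p*') − ℓ(μ',p*')|. -/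

import Mathlib

open MeasureTheory

/-- The market-price map `Ψ_{w,μ}(p)(x) = a + c·p̄ − (1/2)(a + c·p̄ − w(x))⁺`,
with `η = μ([0,L])`, `a = 1/(1+κη)`, `c = 1 − a` and `p̄ = (1/η)∫ p dμ`. -/
noncomputable def Psi (L κ : ℝ) (w : C(Set.Icc (0:ℝ) L, ℝ))
    (μ : Measure (Set.Icc (0:ℝ) L)) (p : C(Set.Icc (0:ℝ) L, ℝ))
    (x : Set.Icc (0:ℝ) L) : ℝ :=
  let η : ℝ := (μ Set.univ).toReal
  let a : ℝ := 1 / (1 + κ * η)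
  let c : ℝ := 1 - a
  let pbar : ℝ := (1 / η) * ∫ y, p y ∂μ
  a + c * pbar - (1 / 2) * max (a + c * pbar - w x) 0

/-- `ℓ(ν,p) = 1/(1+κη(ν)) + (κη(ν)/(1+κη(ν)))·(1/η(ν))·∫ p dν`. -/
noncomputable def ell (L κ : ℝ) (ν : Measure (Set.Icc (0:ℝ) L))
    (p : C(Set.Icc (0:ℝ) L, ℝ)) : ℝ :=
  let η : ℝ := (ν Set.univ).toReal
  1 / (1 + κ * η) + (κ * η / (1 + κ * η)) * ((1 / η) * ∫ y, p y ∂ν)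

lemma Psi_eq_ell (L κ : ℝ) (hκ : 0 < κ) (w : C(Set.Icc (0:ℝ) L, ℝ))
    (μ : Measure (Set.Icc (0:ℝ) L)) (hη : 0 < (μ Set.univ).toReal)
    (p : C(Set.Icc (0:ℝ) L, ℝ)) (x : Set.Icc (0:ℝ) L) :
    Psi L κ w μ p x = ell L κ μ p - (1/2) * max (ell L κ μ p - w x) 0 := by
  have hpos : (0:ℝ) < 1 + κ * (μ Set.univ).toReal := by positivity
  have key : (1:ℝ) / (1 + κ * (μ Set.univ).toReal) +
      (1 - 1 / (1 + κ * (μ Set.univ).toReal)) * ((1 / (μ Set.univ).toReal) * ∫ y, p y ∂μ)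
      = ell L κ μ p := by
    unfold ell
    field_simp
    ring
  simp only [Psi]
  rw [key]

lemma onedlip (s t u : ℝ) :
    |(s - (1/2) * max (s - u) 0) - (t - (1/2) * max (t - u) 0)| ≤ |s - t| := by
  have h1 := le_abs_self (s - t)
  have h2 := neg_abs_le (s - t)
  rcases max_cases (s - u) (0:ℝ) with ⟨e1, e2⟩ | ⟨e1, e2⟩ <;>
    rcases max_cases (t - u) (0:ℝ) with ⟨f1, f2⟩ | ⟨f1, f2⟩ <;>
    rw [e1, f1, abs_le] <;> constructor <;> linarith

/-- Stability of the market price in the measure: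
`‖p* − p*'‖_∞ ≤ (1+κ)·|ℓ(μ,p*') − ℓ(μ',p*')|`. -/
theorem Psi_fixedPoint_stability_in_measure (L κ : ℝ) (hL : 0 < L) (hκ : 0 < κ)
    (w : C(Set.Icc (0:ℝ) L, ℝ))
    (μ μ' : Measure (Set.Icc (0:ℝ) L)) [IsFiniteMeasure μ] [IsFiniteMeasure μ']
    (hη : 0 < (μ Set.univ).toReal) (hη1 : (μ Set.univ).toReal ≤ 1)
    (hη' : 0 < (μ' Set.univ).toReal) (hη1' : (μ' Set.univ).toReal ≤ 1)
    (pstar pstar' : C(Set.Icc (0:ℝ) L, ℝ))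
    (hfix : ∀ x : Set.Icc (0:ℝ) L, Psi L κ w μ pstar x = pstar x)
    (hfix' : ∀ x : Set.Icc (0:ℝ) L, Psi L κ w μ' pstar' x = pstar' x) :
    (⨆ x : Set.Icc (0:ℝ) L, |pstar x - pstar' x|) ≤
      (1 + κ) * |ell L κ μ pstar' - ell L κ μ' pstar'| := by
  set η : ℝ := (μ Set.univ).toReal with hηdef
  have hpos : (0:ℝ) < 1 + κ * η := by positivity
  set c : ℝ := κ * η / (1 + κ * η) with hcdef
  set D : ℝ := |ell L κ μ pstar' - ell L κ μ' pstar'| with hDdef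
  have hD0 : 0 ≤ D := abs_nonneg _
  -- max of the continuous function |pstar - pstar'|
  have hne : Nonempty (Set.Icc (0:ℝ) L) := ⟨⟨0, by constructor <;> [rfl; exact hL.le]⟩⟩
  have hcont : Continuous fun x : Set.Icc (0:ℝ) L => |pstar x - pstar' x| :=
    (pstar.continuous.sub pstar'.continuous).abs
  obtain ⟨x₀, -, hx₀⟩ := isCompact_univ.exists_isMaxOn Set.univ_nonempty
    hcont.continuousOn
  set M : ℝ := |pstar x₀ - pstar' x₀| with hMdef
  have hMmax : ∀ x, |pstar x - pstar' x| ≤ M := fun x => hx₀ (Set.mem_univ x)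
  have hsup : (⨆ x : Set.Icc (0:ℝ) L, |pstar x - pstar' x|) ≤ M :=
    ciSup_le hMmax
  -- pointwise estimate
  have hint : Integrable (fun y => pstar y - pstar' y) μ :=
    (pstar.continuous.sub pstar'.continuous).integrable_of_hasCompactSupport
      (HasCompactSupport.of_compactSpace _)
  have hintbound : |∫ y, (pstar y - pstar' y) ∂μ| ≤ M * η := by
    have := norm_integral_le_of_norm_le_const (μ := μ)
      (f := fun y => pstar y - pstar' y) (C := M) (Filter.Eventually.of_forall (fun y => by simpa [Real.norm_eq_abs] using hMmax y))
    rw [measureReal_def] at this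
    simpa [Real.norm_eq_abs, hηdef] using this
  have hells : |ell L κ μ pstar - ell L κ μ pstar'| ≤ c * M := by
    have hi1 : Integrable (fun y => pstar y) μ :=
      pstar.continuous.integrable_of_hasCompactSupport (HasCompactSupport.of_compactSpace _)
    have hi2 : Integrable (fun y => pstar' y) μ :=
      pstar'.continuous.integrable_of_hasCompactSupport (HasCompactSupport.of_compactSpace _)
    have hdiff : ell L κ μ pstar - ell L κ μ pstar'
        = (κ * η / (1 + κ * η)) * ((1 / η) * ∫ y, (pstar y - pstar' y) ∂μ) := by
      unfold ell
      rw [integral_sub hi1 hi2]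
      ring
    rw [hdiff, abs_mul, abs_mul]
    have h1 : |κ * η / (1 + κ * η)| = c := by
      rw [abs_of_nonneg]; positivity
    have h2 : |1 / η| = 1 / η := by rw [abs_of_nonneg]; positivity
    rw [h1, h2]
    calc c * (1 / η * |∫ y, (pstar y - pstar' y) ∂μ|)
        ≤ c * (1 / η * (M * η)) := by
          apply mul_le_mul_of_nonneg_left _ (by positivity)
          apply mul_le_mul_of_nonneg_left hintbound (by positivity)
      _ = c * M := by field_simp
  have hM : M ≤ c * M + D := by
    have h1 := Psi_eq_ell L κ hκ w μ hη pstar x₀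
    have h2 := Psi_eq_ell L κ hκ w μ' hη' pstar' x₀
    rw [hfix x₀] at h1
    rw [hfix' x₀] at h2
    have hlip := onedlip (ell L κ μ pstar) (ell L κ μ' pstar') (w x₀)
    have : |pstar x₀ - pstar' x₀| ≤ |ell L κ μ pstar - ell L κ μ' pstar'| := by
      rw [h1, h2]; exact hlip
    calc M ≤ |ell L κ μ pstar - ell L κ μ' pstar'| := this
      _ ≤ |ell L κ μ pstar - ell L κ μ pstar'| + |ell L κ μ pstar' - ell L κ μ' pstar'| :=
          abs_sub_le _ _ _
      _ ≤ c * M + D := by rw [hDdef]; exact add_le_add_left hells _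
  -- solve
  have hc1 : c < 1 := by
    rw [hcdef, div_lt_one hpos]; linarith
  have hMD : M ≤ (1 + κ * η) * D := by
    have h1c : 1 - c = 1 / (1 + κ * η) := by
      rw [hcdef]; field_simp
      ring
    have : (1 - c) * M ≤ D := by nlinarith
    rw [h1c] at this
    calc M = (1 + κ * η) * (1 / (1 + κ * η) * M) := by field_simp
      _ ≤ (1 + κ * η) * D := by
          apply mul_le_mul_of_nonneg_left _ hpos.le
          linarith [this]
    
  calc (⨆ x : Set.Icc (0:ℝ) L, |pstar x - pstar' x|) ≤ M := hsup
    _ ≤ (1 + κ * η) * D := hMD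
    _ ≤ (1 + κ) * D := by
        apply mul_le_mul_of_nonneg_right _ hD0
        nlinarith
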